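/- Let u : U → ℝ be a C² solution of the minimal surface equation (1+u_y²)u_xx − 2 u_x u_y u_xy + (1+u_x²)u_yy = 0 on an open set U ⊆ ℝ², and let W = sqrt(1 + u_x² + u_y²). Then the 1-form ω₃ = (−u_y dx + u_x dy)/W is closed on U, i.e. ∂/∂x(u_x/W) + ∂/∂y(u_y/W) = 0. -/

import Mathlib

/-- `∂u/∂x` on `ℝ²`. -/
noncomputable def ux (u : ℝ × ℝ → ℝ) (z : ℝ × ℝ) : ℝ := fderiv ℝ u z (1, 0)

/-- `∂u/∂y` on `ℝ²`. -/
noncomputable def uy (u : ℝ × ℝ → ℝ) (z : ℝ × ℝ) : ℝ := fderiv ℝ u z (0, 1)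

/-- `W = √(1 + u_x² + u_y²)`. -/
noncomputable def Wfun (u : ℝ × ℝ → ℝ) (z : ℝ × ℝ) : ℝ :=
  Real.sqrt (1 + ux u z ^ 2 + uy u z ^ 2)

set_option maxHeartbeats 1000000 in
/-- if `u` is a C² solution of the minimal surface equation on an open set `U`,
then the Noether current `ω₃ = (−u_y dx + u_x dy)/W` is closed, i.e.
`∂/∂x (u_x/W) + ∂/∂y (u_y/W) = 0` on `U`. -/
theorem minimal_surface_equation_implies_third_current_closed
    (U : Set (ℝ × ℝ)) (hU : IsOpen U) (u : ℝ × ℝ → ℝ) (hu : ContDiffOn ℝ 2 u U)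
    (hMSE : ∀ z ∈ U,
      (1 + uy u z ^ 2) * fderiv ℝ (ux u) z (1, 0)
        - 2 * ux u z * uy u z * fderiv ℝ (ux u) z (0, 1)
        + (1 + ux u z ^ 2) * fderiv ℝ (uy u) z (0, 1) = 0) :
    ∀ z ∈ U,
      fderiv ℝ (fun w => ux u w / Wfun u w) z (1, 0)
        + fderiv ℝ (fun w => uy u w / Wfun u w) z (0, 1) = 0 := by
  intro z hz
  have hmem : U ∈ nhds z := hU.mem_nhds hz
  have hcd : ContDiffAt ℝ 2 u z := (hu z hz).contDiffAt hmem
  have hcd' : ContDiffAt ℝ 1 (fderiv ℝ u) z :=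
    hcd.fderiv_right (m := 1) (by norm_num)
  have hsymm : IsSymmSndFDerivAt ℝ u z := hcd.isSymmSndFDerivAt (by simp)
  set f'' := fderiv ℝ (fderiv ℝ u) z with hf''def
  have hdf' : HasFDerivAt (fderiv ℝ u) f'' z :=
    (hcd'.differentiableAt one_ne_zero).hasFDerivAt
  -- the first-order derivatives of p = ux u and q = uy u
  set P : (ℝ × ℝ) →L[ℝ] ℝ :=
    (ContinuousLinearMap.apply ℝ ℝ (((1 : ℝ), (0 : ℝ)))).comp f'' with hPdef
  set Q : (ℝ × ℝ) →L[ℝ] ℝ :=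
    (ContinuousLinearMap.apply ℝ ℝ (((0 : ℝ), (1 : ℝ)))).comp f'' with hQdef
  have hp : HasFDerivAt (ux u) P z :=
    (ContinuousLinearMap.apply ℝ ℝ (((1 : ℝ), (0 : ℝ)))).hasFDerivAt.comp z hdf'
  have hq : HasFDerivAt (uy u) Q z :=
    (ContinuousLinearMap.apply ℝ ℝ (((0 : ℝ), (1 : ℝ)))).hasFDerivAt.comp z hdf'
  set a := ux u z with hadef
  set b := uy u z with hbdef
  set S : ℝ := 1 + a ^ 2 + b ^ 2 with hSdef
  have hSpos : 0 < S := by positivity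
  set Wz : ℝ := Real.sqrt S with hWzdef
  have hWzpos : 0 < Wz := Real.sqrt_pos.2 hSpos
  have hWzsq : Wz ^ 2 = S := Real.sq_sqrt hSpos.le
  -- derivative of the inner function of W
  have hg : HasFDerivAt (fun w => 1 + ux u w ^ 2 + uy u w ^ 2)
      ((2 * a) • P + (2 * b) • Q) z := by
    have h1 : HasFDerivAt (fun w => ux u w * ux u w) (a • P + a • P) z := hp.mul hp
    have h2 : HasFDerivAt (fun w => uy u w * uy u w) (b • Q + b • Q) z := hq.mul hq
    have h3 : HasFDerivAt (fun w => 1 + ux u w * ux u w + uy u w * uy u w)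
        ((0 : (ℝ × ℝ) →L[ℝ] ℝ) + (a • P + a • P) + (b • Q + b • Q)) z :=
      ((hasFDerivAt_const (1 : ℝ) z).add h1).add h2
    have heq : (fun w => 1 + ux u w ^ 2 + uy u w ^ 2)
        = fun w => 1 + ux u w * ux u w + uy u w * uy u w := by
      funext w; ring
    rw [heq]
    convert h3 using 1
    module
  -- derivative of W
  have hWval : Wfun u z = Wz := rfl
  have hW : HasFDerivAt (Wfun u)
      ((1 / (2 * Wz)) • ((2 * a) • P + (2 * b) • Q)) z := by
    have := hg.sqrt (f := fun w => 1 + ux u w ^ 2 + uy u w ^ 2) (by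
      show (1 : ℝ) + a ^ 2 + b ^ 2 ≠ 0
      positivity)
    exact this
  have hWne : Wfun u z ≠ 0 := by rw [hWval]; exact hWzpos.ne'
  -- derivative of 1/W
  have hWinv : HasFDerivAt (fun w => (Wfun u w)⁻¹)
      ((-(Wz ^ 2)⁻¹) • ((1 / (2 * Wz)) • ((2 * a) • P + (2 * b) • Q))) z := by
    have hinv : HasDerivAt (fun t : ℝ => t⁻¹) (-(Wfun u z ^ 2)⁻¹) (Wfun u z) :=
      hasDerivAt_inv hWne
    have := hinv.comp_hasFDerivAt z hW
    rw [hWval] at this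
    exact this
  -- derivatives of the two quotients
  have hq1 : HasFDerivAt (fun w => ux u w / Wfun u w)
      (a • ((-(Wz ^ 2)⁻¹) • ((1 / (2 * Wz)) • ((2 * a) • P + (2 * b) • Q)))
        + Wz⁻¹ • P) z := by
    have h := hp.mul hWinv
    rw [hWval] at h
    have heq : (fun w => ux u w / Wfun u w) = fun w => ux u w * (Wfun u w)⁻¹ := by
      funext w; rw [div_eq_mul_inv]
    rw [heq]
    exact h
  have hq2 : HasFDerivAt (fun w => uy u w / Wfun u w)
      (b • ((-(Wz ^ 2)⁻¹) • ((1 / (2 * Wz)) • ((2 * a) • P + (2 * b) • Q)))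
        + Wz⁻¹ • Q) z := by
    have h := hq.mul hWinv
    rw [hWval] at h
    have heq : (fun w => uy u w / Wfun u w) = fun w => uy u w * (Wfun u w)⁻¹ := by
      funext w; rw [div_eq_mul_inv]
    rw [heq]
    exact h
  rw [hq1.fderiv, hq2.fderiv]
  -- abbreviations for the second derivatives
  set A := f'' (1, 0) (1, 0) with hA
  set B := f'' (0, 1) (1, 0) with hB
  set C := f'' (0, 1) (0, 1) with hC
  have hsymmBC : f'' (1, 0) (0, 1) = B := hsymm (1, 0) (0, 1)
  have hPv : ∀ v, P v = f'' v (1, 0) := fun v => rfl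
  have hQv : ∀ v, Q v = f'' v (0, 1) := fun v => rfl
  -- minimal surface equation at z in terms of A, B, C
  have hmse : (1 + b ^ 2) * A - 2 * a * b * B + (1 + a ^ 2) * C = 0 := by
    have := hMSE z hz
    rw [hp.fderiv, hq.fderiv] at this
    simpa [hPv, hQv, hsymmBC, ← hadef, ← hbdef, ← hA, ← hB, ← hC] using this
  simp only [ContinuousLinearMap.add_apply, ContinuousLinearMap.smul_apply,
    smul_eq_mul]
  rw [hPv, hPv, hQv, hQv, hsymmBC]
  rw [← hA, ← hB, ← hC]
  have hWzne : Wz ≠ 0 := hWzpos.ne'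
  field_simp
  linear_combination hmse + (A + C) * hWzsq + (A + C) * hSdef
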